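/- Suppose f : [0, t₀] → ℝ is nonnegative, differentiable, and satisfies f'(t) ≤ C + C f(t) − (1/C) f(t)² for a constant C > 0. Then f(t) ≤ C'/t for all t ∈ (0, t₀], where C' depends only on C and t₀. -/

import Mathlib

set_option maxHeartbeats 1000000


/-- ODE lemma behind the parabolic smoothing estimate: if `f ≥ 0` satisfies
`f' ≤ C + C f - f²/C` on `[0, t₀]`, then `f(t) ≤ C'/t` on `(0, t₀]`, where `C'`
depends only on `C` and `t₀`. -/
theorem stmt_18 (C t₀ : ℝ) (hC : 0 < C) (ht₀ : 0 < t₀) :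
    ∃ C' : ℝ, ∀ f : ℝ → ℝ,
      (∀ t ∈ Set.Icc (0 : ℝ) t₀, 0 ≤ f t) →
      (∀ t ∈ Set.Icc (0 : ℝ) t₀, HasDerivAt f (deriv f t) t) →
      (∀ t ∈ Set.Icc (0 : ℝ) t₀, deriv f t ≤ C + C * f t - (f t) ^ 2 / C) →
      ∀ t ∈ Set.Ioc (0 : ℝ) t₀, f t ≤ C' / t := by
  set C' : ℝ := C * (C * t₀ + 2) + C * t₀ ^ 2 + 1 with hC'def
  clear_value C'
  have hC'pos : 0 < C' := by nlinarith [mul_pos hC ht₀, mul_pos hC (mul_pos hC ht₀), mul_pos hC (mul_pos ht₀ ht₀)]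
  -- C'/x is a strict supersolution on (0, t₀]
  have key : ∀ x : ℝ, 0 < x → x ≤ t₀ →
      C + C * (C' / x) - (C' / x) ^ 2 / C + C' / x ^ 2 < 0 := by
    intro x hx hxt
    have hx2 : 0 < x ^ 2 := by positivity
    have heq : C + C * (C' / x) - (C' / x) ^ 2 / C + C' / x ^ 2
        = (C ^ 2 * x ^ 2 + C ^ 2 * C' * x + C * C' - C' ^ 2) / (C * x ^ 2) := by
      field_simp; ring
    rw [heq]
    apply div_neg_of_neg_of_pos _ (by positivity)
    have ha : C * (C * t₀ + 2) ≤ C' := by nlinarith [mul_pos hC (mul_pos ht₀ ht₀)]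
    have hb : C * t₀ ^ 2 < C' := by nlinarith [mul_pos hC (mul_pos hC ht₀)]
    have p1 : C' * (C * (C * t₀ + 2)) ≤ C' * C' := by
      exact mul_le_mul_of_nonneg_left ha hC'pos.le
    have p2 : C ^ 2 * C' * x ≤ C ^ 2 * C' * t₀ := by
      apply mul_le_mul_of_nonneg_left hxt; positivity
    have p3 : C ^ 2 * x ^ 2 ≤ C ^ 2 * t₀ ^ 2 := by nlinarith [sq_nonneg C]
    have p4 : 0 < C * (C' - C * t₀ ^ 2) := mul_pos hC (by linarith)
    nlinarith
  refine ⟨C', ?_⟩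
  intro f hf0 hfd hfode
  have hcont : ContinuousOn f (Set.Icc 0 t₀) := fun x hx =>
    (hfd x hx).continuousAt.continuousWithinAt
  obtain ⟨xM, hxM, hmax⟩ := isCompact_Icc.exists_isMaxOn
    ⟨0, Set.left_mem_Icc.2 ht₀.le⟩ hcont
  set M : ℝ := f xM with hMdef
  clear_value M
  have hM0 : 0 ≤ M := by rw [hMdef]; exact hf0 xM hxM
  intro t₁ ht₁
  obtain ⟨ht₁0, ht₁t₀⟩ := ht₁
  by_contra hcon
  push_neg at hcon
  -- start point s₀ where f is below the barrier
  set s₀ : ℝ := min (t₁ / 2) (C' / (M + 1)) with hs₀def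
  clear_value s₀
  have hs₀pos : 0 < s₀ := hs₀def ▸ lt_min (by linarith) (by positivity)
  have hs₀lt : s₀ < t₁ := by
    rw [hs₀def]; exact (min_le_left _ _).trans_lt (by linarith)
  have hs₀t₀ : s₀ ≤ t₀ := hs₀lt.le.trans ht₁t₀
  have hsub : Set.Icc s₀ t₁ ⊆ Set.Icc 0 t₀ := fun x hx =>
    ⟨hs₀pos.le.trans hx.1, hx.2.trans ht₁t₀⟩
  have hfs₀ : f s₀ * s₀ ≤ C' := by
    have h1 : s₀ ≤ C' / (M + 1) := hs₀def ▸ min_le_right _ _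
    have h2 : f s₀ ≤ M := by rw [hMdef]; exact hmax ⟨hs₀pos.le, hs₀t₀⟩
    have h3 : s₀ * (M + 1) ≤ C' := by
      rw [← le_div_iff₀ (by linarith)] at *
      exact h1
    nlinarith [mul_nonneg (hf0 s₀ ⟨hs₀pos.le, hs₀t₀⟩) hs₀pos.le]
  -- the last time f s * s ≤ C'
  set S : Set ℝ := {s ∈ Set.Icc s₀ t₁ | f s * s ≤ C'} with hSdef
  clear_value S
  have hSne : S.Nonempty := ⟨s₀, hSdef ▸ ⟨Set.left_mem_Icc.2 hs₀lt.le, hfs₀⟩⟩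
  have hSbdd : BddAbove S := ⟨t₁, fun x hx => (hSdef ▸ hx).1.2⟩
  have hFcont : ContinuousOn (fun s => f s * s) (Set.Icc s₀ t₁) :=
    (hcont.mono hsub).mul continuousOn_id
  have hSclosed : IsClosed S := by
    have h := hFcont.preimage_isClosed_of_isClosed isClosed_Icc
      (isClosed_Iic (a := C'))
    rw [hSdef]
    convert h using 1
    rfl
  set s₁ : ℝ := sSup S with hs₁def
  clear_value s₁
  have hs₁mem : s₁ ∈ S := hs₁def ▸ hSclosed.csSup_mem hSne hSbdd
  rw [hSdef] at hs₁mem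
  obtain ⟨⟨hs₁l, hs₁r⟩, hs₁le⟩ := hs₁mem
  have hs₁pos : 0 < s₁ := hs₀pos.trans_le hs₁l
  have hft₁ : C' < f t₁ * t₁ := by
    rw [div_lt_iff₀ ht₁0] at hcon; linarith
  have hs₁lt : s₁ < t₁ := lt_of_le_of_ne hs₁r (fun h => by
    rw [h] at hs₁le; linarith)
  -- beyond s₁ the function is above the barrier
  have habove : ∀ s ∈ Set.Ioc s₁ t₁, C' / s < f s := by
    intro s hs
    have hspos : 0 < s := hs₁pos.trans hs.1
    by_contra hle
    push_neg at hle
    have hmem : s ∈ S := by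
      rw [hSdef]
      exact ⟨⟨hs₁l.trans hs.1.le, hs.2⟩, (le_div_iff₀ hspos).mp hle⟩
    have := le_csSup hSbdd hmem
    rw [← hs₁def] at this
    exact absurd this (not_le.2 hs.1)
  -- the difference h = f - C'/· is strictly decreasing on [s₁, t₁]
  set g : ℝ → ℝ := fun s => f s - C' / s with hgdef
  clear_value g
  have hgd : ∀ x ∈ Set.Ioo s₁ t₁, HasDerivAt g (deriv f x + C' / x ^ 2) x := by
    intro x hx
    have hxpos : 0 < x := hs₁pos.trans hx.1
    have hx0t : x ∈ Set.Icc (0:ℝ) t₀ := ⟨hxpos.le, hx.2.le.trans ht₁t₀⟩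
    have h1 : HasDerivAt (fun s : ℝ => C' / s) (C' * -(x ^ 2)⁻¹) x := by
      simpa [div_eq_mul_inv] using (hasDerivAt_inv hxpos.ne').const_mul C'
    rw [hgdef]
    have h2 := (hfd x hx0t).sub h1
    exact h2.congr_deriv (by ring)
  have hderivneg : ∀ x ∈ interior (Set.Icc s₁ t₁), deriv g x < 0 := by
    rw [interior_Icc]
    intro x hx
    have hxpos : 0 < x := hs₁pos.trans hx.1
    have hxt₀ : x ≤ t₀ := hx.2.le.trans ht₁t₀
    have hx0t : x ∈ Set.Icc (0:ℝ) t₀ := ⟨hxpos.le, hxt₀⟩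
    have hgx := hgd x hx
    rw [hgx.deriv]
    have hfx : C' / x < f x := habove x ⟨hx.1, hx.2.le⟩
    -- φ is decreasing above C²/2, and C'/x ≥ C'/t₀ > C²
    have hbig : C ^ 2 < C' / x := by
      rw [lt_div_iff₀ hxpos]
      nlinarith
    have hmono : C + C * f x - (f x) ^ 2 / C ≤
        C + C * (C' / x) - (C' / x) ^ 2 / C := by
      have h1 : C ^ 2 < f x := hbig.trans hfx
      have h2 : C * (f x - C' / x) ≤ (f x ^ 2 - (C' / x) ^ 2) / C := by
        rw [le_div_iff₀ hC]
        nlinarith [mul_nonneg (sub_nonneg.2 hfx.le)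
          (by nlinarith : (0:ℝ) ≤ C' / x + f x - C ^ 2)]
      have h3 : (f x ^ 2 - (C' / x) ^ 2) / C = f x ^ 2 / C - (C' / x) ^ 2 / C := by
        ring
      linarith
    have hode := hfode x hx0t
    have hk := key x hxpos hxt₀
    linarith only [hode, hk, hmono]
  have hgcont : ContinuousOn g (Set.Icc s₁ t₁) := by
    rw [hgdef]
    apply ContinuousOn.sub
    · exact hcont.mono (fun x hx => ⟨(hs₀pos.trans_le hs₁l).le.trans hx.1,
        hx.2.trans ht₁t₀⟩)
    · exact continuousOn_const.div continuousOn_id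
        (fun x hx => (hs₁pos.trans_le hx.1).ne')
  have hanti : StrictAntiOn g (Set.Icc s₁ t₁) :=
    strictAntiOn_of_deriv_neg (convex_Icc _ _) hgcont hderivneg
  have h1 : g t₁ < g s₁ :=
    hanti (Set.left_mem_Icc.2 hs₁lt.le) (Set.right_mem_Icc.2 hs₁lt.le) hs₁lt
  have hgs₁ : g s₁ ≤ 0 := by
    have h : f s₁ ≤ C' / s₁ := (le_div_iff₀ hs₁pos).2 hs₁le
    rw [hgdef]
    show f s₁ - C' / s₁ ≤ 0
    linarith
  have hgt₁ : 0 < g t₁ := by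
    rw [hgdef]
    have h : C' / t₁ < f t₁ := hcon
    show 0 < f t₁ - C' / t₁
    linarith
  linarith
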